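/- Let 2 ≤ p < 3, let f = (f_1, ..., f_d) be vector fields on R^n of class C²_b, and let x solve x_{k+1} = x_k + Σ_μ f_μ(x_k)(w^μ_{k+1} − w^μ_k) driven by a time series w with lift 𝕎. Define I_{k,l} := (x_l − x_k) − Σ_μ f_μ(x_k)(w^μ_l − w^μ_k) and J^μ_{k,l} := f_μ(x_l) − f_μ(x_k) − Σ_ν Df_μ(x_k) f_ν(x_k)(w^ν_l − w^ν_k). Then max_{μ=1,...,d} ||J^μ||_{p/2;[k,l]} ≤ 2^{1−2/p} ||f||_{C²_b} ( ||I||^{p/2}_{p/2;[k,l]} + (1/2) ||x||^p_{p;[k,l]} )^{2/p}. -/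

import Mathlib

noncomputable section

/-- `s` is an increasing subsequence (partition) of `{k, …, l}` from `k` to `l`. -/
def IsPart (k l : ℕ) (s : List ℕ) : Prop :=
  s.Chain' (· < ·) ∧ s.head? = some k ∧ s.getLast? = some l

/-- Supremum over partitions of the sums of `p`-th powers of increments of a triangular array. -/
def pVarSum {E : Type*} [NormedAddCommGroup E] (p : ℝ) (Ξ : ℕ → ℕ → E) (k l : ℕ) : ℝ :=
  sSup { x : ℝ | ∃ s : List ℕ, IsPart k l s ∧
    x = ((s.zip s.tail).map fun ab => ‖Ξ ab.1 ab.2‖ ^ p).sum }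

/-- The `p`-variation of a triangular array over `[k,l]`. -/
def pVar {E : Type*} [NormedAddCommGroup E] (p : ℝ) (Ξ : ℕ → ℕ → E) (k l : ℕ) : ℝ :=
  pVarSum p Ξ k l ^ (1 / p)

/-- The `p`-variation of a time series over `[k,l]`. -/
def pVarSeq {E : Type*} [NormedAddCommGroup E] (p : ℝ) (x : ℕ → E) (k l : ℕ) : ℝ :=
  pVar p (fun a b => x b - x a) k l

/-- A discrete control on `{0, …, N}`: nonnegative, vanishing on the diagonal, superadditive. -/
def IsControl (N : ℕ) (ω : ℕ → ℕ → ℝ) : Prop :=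
  (∀ k l, k ≤ l → l ≤ N → 0 ≤ ω k l) ∧
  (∀ k, k ≤ N → ω k k = 0) ∧
  (∀ k l m, k < l → l < m → m ≤ N → ω k l + ω l m ≤ ω k m)

/-- The `C²_b` norm of a family of vector fields: `max_μ max(sup ‖Df_μ‖, sup ‖D²f_μ‖)`. -/
def C2bNormF {d n : ℕ} (f : Fin d → (Fin n → ℝ) → (Fin n → ℝ)) : ℝ :=
  max (⨆ μ, ⨆ y, ‖iteratedFDeriv ℝ 1 (f μ) y‖)
    (⨆ μ, ⨆ y, ‖iteratedFDeriv ℝ 2 (f μ) y‖)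

/-! ### Auxiliary lemmas -/

lemma real_add_rpow_le {u v q : ℝ} (hu : 0 ≤ u) (hv : 0 ≤ v) (hq : 1 ≤ q) :
    (u + v) ^ q ≤ 2 ^ (q - 1) * (u ^ q + v ^ q) := by
  have h := NNReal.rpow_add_le_mul_rpow_add_rpow u.toNNReal v.toNNReal hq
  have h2 : ((u.toNNReal + v.toNNReal : NNReal) : ℝ) ^ q ≤
      (2 : ℝ) ^ (q - 1) * (((u.toNNReal : ℝ)) ^ q + ((v.toNNReal : ℝ)) ^ q) := by
    exact_mod_cast h
  rwa [NNReal.coe_add, Real.coe_toNNReal u hu, Real.coe_toNNReal v hv] at h2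

lemma mem_of_head?_pairwise {α : Type*} {s : List α} {k a : α} {R : α → α → Prop}
    (hh : s.head? = some k) (hp : s.Pairwise R) (ha : a ∈ s) : a = k ∨ R k a := by
  cases s with
  | nil => simp at hh
  | cons b t =>
    obtain rfl : b = k := by simpa using hh
    rcases List.mem_cons.mp ha with rfl | ha'
    · exact Or.inl rfl
    · exact Or.inr (List.rel_of_pairwise_cons hp ha')

lemma IsPart.pairwise {k l : ℕ} {s : List ℕ} (h : IsPart k l s) : s.Pairwise (· < ·) :=
  List.isChain_iff_pairwise.mp h.1

lemma IsPart.mem_bounds {k l : ℕ} {s : List ℕ} (h : IsPart k l s) :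
    ∀ a ∈ s, k ≤ a ∧ a ≤ l := by
  intro a ha
  constructor
  · rcases mem_of_head?_pairwise h.2.1 h.pairwise ha with rfl | h'
    · exact le_rfl
    · exact h'.le
  · have hrev : s.reverse.Pairwise (fun a b => b < a) :=
      List.pairwise_reverse.mpr h.pairwise
    have hh : s.reverse.head? = some l := by rw [List.head?_reverse]; exact h.2.2
    rcases mem_of_head?_pairwise hh hrev (List.mem_reverse.mpr ha) with rfl | h'
    · exact le_rfl
    · exact h'.le

lemma IsPart.length_le {k l : ℕ} {s : List ℕ} (h : IsPart k l s) : s.length ≤ l + 1 := by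
  classical
  have hnd : s.Nodup := h.pairwise.imp (fun hab => Nat.ne_of_lt hab)
  have hsub : s.toFinset ⊆ Finset.range (l + 1) := by
    intro a ha
    simp only [List.mem_toFinset] at ha
    exact Finset.mem_range.mpr (Nat.lt_succ_of_le (h.mem_bounds a ha).2)
  calc s.length = s.toFinset.card := (List.toFinset_card_of_nodup hnd).symm
    _ ≤ (Finset.range (l + 1)).card := Finset.card_le_card hsub
    _ = l + 1 := Finset.card_range _

lemma pVarSum_bddAbove {E : Type*} [NormedAddCommGroup E] (p : ℝ) (Ξ : ℕ → ℕ → E) (k l : ℕ) :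
    BddAbove { x : ℝ | ∃ s : List ℕ, IsPart k l s ∧
      x = ((s.zip s.tail).map fun ab => ‖Ξ ab.1 ab.2‖ ^ p).sum } := by
  obtain ⟨M, hM0, hM⟩ : ∃ M : ℝ, 0 ≤ M ∧ ∀ a b : ℕ, a ≤ l → b ≤ l → ‖Ξ a b‖ ^ p ≤ M := by
    have hfin : ((fun ab : ℕ × ℕ => ‖Ξ ab.1 ab.2‖ ^ p) '' (Set.Iic l ×ˢ Set.Iic l)).Finite :=
      ((Set.finite_Iic l).prod (Set.finite_Iic l)).image _
    obtain ⟨M₀, hM₀⟩ := hfin.bddAbove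
    refine ⟨max M₀ 0, le_max_right _ _, fun a b ha hb => ?_⟩
    exact le_trans (hM₀ ⟨(a, b), ⟨ha, hb⟩, rfl⟩) (le_max_left _ _)
  refine ⟨(l + 1 : ℕ) * M, ?_⟩
  rintro x ⟨s, hs, rfl⟩
  have hterm : ∀ y ∈ (s.zip s.tail).map (fun ab => ‖Ξ ab.1 ab.2‖ ^ p), y ≤ M := by
    intro y hy
    simp only [List.mem_map] at hy
    obtain ⟨ab, hab, rfl⟩ := hy
    obtain ⟨h1, h2⟩ := List.of_mem_zip hab
    exact hM _ _ (hs.mem_bounds _ h1).2 (hs.mem_bounds _ (List.mem_of_mem_tail h2)).2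
  calc ((s.zip s.tail).map fun ab => ‖Ξ ab.1 ab.2‖ ^ p).sum
      ≤ ((s.zip s.tail).map fun ab => ‖Ξ ab.1 ab.2‖ ^ p).length • M :=
        List.sum_le_card_nsmul _ _ hterm
    _ = ((s.zip s.tail).length : ℝ) * M := by rw [List.length_map, nsmul_eq_mul]
    _ ≤ (l + 1 : ℕ) * M := by
        apply mul_le_mul_of_nonneg_right _ hM0
        have h1 : (s.zip s.tail).length ≤ s.length := by
          rw [List.length_zip]; exact min_le_left _ _
        exact_mod_cast h1.trans hs.length_le

lemma pVarSum_set_nonempty {E : Type*} [NormedAddCommGroup E] (p : ℝ) (Ξ : ℕ → ℕ → E)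
    {k l : ℕ} (hkl : k ≤ l) :
    Set.Nonempty { x : ℝ | ∃ s : List ℕ, IsPart k l s ∧
      x = ((s.zip s.tail).map fun ab => ‖Ξ ab.1 ab.2‖ ^ p).sum } := by
  rcases eq_or_lt_of_le hkl with rfl | h
  · exact ⟨_, [k], ⟨List.isChain_singleton k, rfl, rfl⟩, rfl⟩
  · exact ⟨_, [k, l], ⟨List.isChain_pair.mpr h, rfl, rfl⟩, rfl⟩

lemma le_pVarSum {E : Type*} [NormedAddCommGroup E] (p : ℝ) (Ξ : ℕ → ℕ → E) {k l : ℕ}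
    {s : List ℕ} (hs : IsPart k l s) :
    ((s.zip s.tail).map fun ab => ‖Ξ ab.1 ab.2‖ ^ p).sum ≤ pVarSum p Ξ k l :=
  le_csSup (pVarSum_bddAbove p Ξ k l) ⟨s, hs, rfl⟩

lemma pVarSum_nonneg {E : Type*} [NormedAddCommGroup E] (p : ℝ) (Ξ : ℕ → ℕ → E) {k l : ℕ}
    (hkl : k ≤ l) : 0 ≤ pVarSum p Ξ k l := by
  obtain ⟨x, s, hs, hx⟩ := pVarSum_set_nonempty p Ξ (k := k) (l := l) hkl
  refine le_trans ?_ (le_pVarSum p Ξ hs)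
  apply List.sum_nonneg
  intro y hy
  simp only [List.mem_map] at hy
  obtain ⟨ab, _, rfl⟩ := hy
  exact Real.rpow_nonneg (norm_nonneg _) p

lemma list_sum_comb {ι : Type*} (l : List ι) (g h : ι → ℝ) (K c : ℝ) :
    (l.map fun i => K * (g i + c * h i)).sum = K * ((l.map g).sum + c * (l.map h).sum) := by
  induction l with
  | nil => simp
  | cons a t ih => simp only [List.map_cons, List.sum_cons, ih]; ring

/-- Second-order Taylor estimate with the sharp constant `1/2`. -/
lemma taylor2 {n : ℕ} {g : (Fin n → ℝ) → (Fin n → ℝ)} (hg : ContDiff ℝ 2 g) {C : ℝ}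
    (hC : ∀ y, ‖iteratedFDeriv ℝ 2 g y‖ ≤ C) (a b : Fin n → ℝ) :
    ‖g b - g a - fderiv ℝ g a (b - a)‖ ≤ C / 2 * ‖b - a‖ ^ 2 := by
  set v := b - a with hv
  have hdg : Differentiable ℝ g := hg.differentiable (by norm_num)
  have hdg' : Differentiable ℝ (fderiv ℝ g) :=
    (hg.fderiv_right (m := 1) (by norm_num)).differentiable (by norm_num)
  have hfb2 : ∀ y, ‖fderiv ℝ (fderiv ℝ g) y‖ ≤ C := by
    intro y
    calc ‖fderiv ℝ (fderiv ℝ g) y‖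
        = ‖iteratedFDeriv ℝ 0 (fderiv ℝ (fderiv ℝ g)) y‖ := by rw [norm_iteratedFDeriv_zero]
      _ = ‖iteratedFDeriv ℝ 1 (fderiv ℝ g) y‖ := norm_iteratedFDeriv_fderiv
      _ = ‖iteratedFDeriv ℝ 2 g y‖ := norm_iteratedFDeriv_fderiv
      _ ≤ C := hC y
  have hLip : ∀ y : Fin n → ℝ, ‖fderiv ℝ g y - fderiv ℝ g a‖ ≤ C * ‖y - a‖ := fun y =>
    Convex.norm_image_sub_le_of_norm_fderiv_le (fun z _ => hdg'.differentiableAt)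
      (fun z _ => hfb2 z) convex_univ (Set.mem_univ a) (Set.mem_univ y)
  set F : ℝ → (Fin n → ℝ) := fun t => g (a + t • v) - g a - t • (fderiv ℝ g a v) with hF
  set F' : ℝ → (Fin n → ℝ) := fun t => fderiv ℝ g (a + t • v) v - fderiv ℝ g a v with hF'
  have hFd : ∀ t : ℝ, HasDerivAt F (F' t) t := by
    intro t
    have h1 : HasDerivAt (fun s : ℝ => a + s • v) v t := by
      simpa using ((hasDerivAt_id t).smul_const v).const_add a
    have h2 : HasDerivAt (fun s : ℝ => g (a + s • v)) (fderiv ℝ g (a + t • v) v) t := by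
      have := (hdg.differentiableAt (x := a + t • v)).hasFDerivAt.comp_hasDerivAt t h1
      exact this
    have h3 : HasDerivAt (fun s : ℝ => s • (fderiv ℝ g a v)) (fderiv ℝ g a v) t := by
      simpa using (hasDerivAt_id t).smul_const (fderiv ℝ g a v)
    exact (h2.sub_const (g a)).sub h3
  have hB : ∀ t : ℝ, HasDerivAt (fun s : ℝ => C / 2 * ‖v‖ ^ 2 * s ^ 2) (C * ‖v‖ ^ 2 * t) t := by
    intro t
    have h := (hasDerivAt_pow 2 t).const_mul (C / 2 * ‖v‖ ^ 2)
    refine h.congr_deriv ?_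
    norm_num
    ring
  have hbound : ∀ t ∈ Set.Ico (0 : ℝ) 1, ‖F' t‖ ≤ C * ‖v‖ ^ 2 * t := by
    intro t ht
    have h1 : F' t = (fderiv ℝ g (a + t • v) - fderiv ℝ g a) v := by
      simp [hF', ContinuousLinearMap.sub_apply]
    rw [h1]
    calc ‖(fderiv ℝ g (a + t • v) - fderiv ℝ g a) v‖
        ≤ ‖fderiv ℝ g (a + t • v) - fderiv ℝ g a‖ * ‖v‖ :=
          ContinuousLinearMap.le_opNorm _ _
      _ ≤ (C * ‖(a + t • v) - a‖) * ‖v‖ :=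
          mul_le_mul_of_nonneg_right (hLip _) (norm_nonneg v)
      _ = C * ‖v‖ ^ 2 * t := by
          rw [add_sub_cancel_left, norm_smul, Real.norm_eq_abs, abs_of_nonneg ht.1]
          ring
  have key := image_norm_le_of_norm_deriv_right_le_deriv_boundary
    (f := F) (f' := F') (a := 0) (b := 1)
    (fun t _ => (hFd t).continuousAt.continuousWithinAt)
    (fun t _ => (hFd t).hasDerivWithinAt)
    (B := fun t => C / 2 * ‖v‖ ^ 2 * t ^ 2) (B' := fun t => C * ‖v‖ ^ 2 * t)
    (by simp [hF]) hB hbound (Set.right_mem_Icc.mpr zero_le_one)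
  have h2 : a + v = b := by rw [hv]; abel
  simpa [hF, h2] using key

lemma C2bNormF_bounds {d n : ℕ} (f : Fin d → (Fin n → ℝ) → (Fin n → ℝ))
    (hfb : ∀ μ, ∀ j : ℕ, j ≤ 2 → ∃ C : ℝ, ∀ y, ‖iteratedFDeriv ℝ j (f μ) y‖ ≤ C) (μ : Fin d) :
    (∀ y, ‖fderiv ℝ (f μ) y‖ ≤ C2bNormF f) ∧
    (∀ y, ‖iteratedFDeriv ℝ 2 (f μ) y‖ ≤ C2bNormF f) := by
  have hne : Nonempty (Fin d) := ⟨μ⟩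
  have key : ∀ j : ℕ, j ≤ 2 → ∀ y, ‖iteratedFDeriv ℝ j (f μ) y‖ ≤
      ⨆ ν, ⨆ z, ‖iteratedFDeriv ℝ j (f ν) z‖ := by
    intro j hj y
    have hb : ∀ ν : Fin d, BddAbove (Set.range fun z => ‖iteratedFDeriv ℝ j (f ν) z‖) := by
      intro ν
      obtain ⟨Cj, hCj⟩ := hfb ν j hj
      exact ⟨Cj, by rintro _ ⟨z, rfl⟩; exact hCj z⟩
    refine le_trans (le_ciSup (hb μ) y) ?_
    exact le_ciSup (f := fun ν => ⨆ z, ‖iteratedFDeriv ℝ j (f ν) z‖)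
      (Set.finite_range _).bddAbove μ
  constructor
  · intro y
    have h1 : ‖fderiv ℝ (f μ) y‖ = ‖iteratedFDeriv ℝ 1 (f μ) y‖ := by
      calc ‖fderiv ℝ (f μ) y‖ = ‖iteratedFDeriv ℝ 0 (fderiv ℝ (f μ)) y‖ :=
            norm_iteratedFDeriv_zero.symm
        _ = ‖iteratedFDeriv ℝ 1 (f μ) y‖ := norm_iteratedFDeriv_fderiv
    rw [h1]
    exact (key 1 (by norm_num) y).trans (le_max_left _ _)
  · intro y
    exact (key 2 le_rfl y).trans (le_max_right _ _)

/-- Bound on the `p/2`-variation of the rough-regime remainders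
`J^μ_{k,l} = f_μ(x_l) − f_μ(x_k) − Σ_ν Df_μ(x_k) f_ν(x_k) w^ν_{k,l}`. -/
theorem rough_J_bound (d n N : ℕ) (p : ℝ) (hp1 : 2 ≤ p) (hp2 : p < 3)
    (f : Fin d → (Fin n → ℝ) → (Fin n → ℝ))
    (hf : ∀ μ, ContDiff ℝ 2 (f μ))
    (hfb : ∀ μ, ∀ j : ℕ, j ≤ 2 → ∃ C : ℝ, ∀ y, ‖iteratedFDeriv ℝ j (f μ) y‖ ≤ C)
    (w : ℕ → Fin d → ℝ) (x : ℕ → Fin n → ℝ)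
    (hstep : ∀ k : ℕ, k < N →
      x (k + 1) = x k + ∑ μ : Fin d, (w (k + 1) μ - w k μ) • f μ (x k))
    (I : ℕ → ℕ → Fin n → ℝ)
    (hI : ∀ k l, I k l = x l - x k - ∑ μ : Fin d, (w l μ - w k μ) • f μ (x k))
    (J : Fin d → ℕ → ℕ → Fin n → ℝ)
    (hJ : ∀ μ k l, J μ k l = f μ (x l) - f μ (x k) -
      ∑ ν : Fin d, (w l ν - w k ν) • fderiv ℝ (f μ) (x k) (f ν (x k))) :
    ∀ k l : ℕ, k ≤ l → l ≤ N → ∀ μ : Fin d,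
      pVar (p / 2) (J μ) k l ≤
        2 ^ (1 - 2 / p) * C2bNormF f *
          (pVar (p / 2) I k l ^ (p / 2) + (1 / 2) * pVarSeq p x k l ^ p) ^ (2 / p) := by
  intro k l hkl hlN μ
  have hp0 : (0 : ℝ) < p := by linarith
  obtain ⟨hC1, hC2⟩ := C2bNormF_bounds f hfb μ
  set C := C2bNormF f with hCdef
  have hC0 : 0 ≤ C := le_trans (norm_nonneg _) (hC2 0)
  set q := p / 2 with hq
  have hq1 : 1 ≤ q := by rw [hq]; linarith
  have hq0 : (0 : ℝ) < q := by linarith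
  -- pointwise identity and bound
  have hpoint : ∀ a b : ℕ, ‖J μ a b‖ ≤ C * ‖I a b‖ + C / 2 * ‖x b - x a‖ ^ 2 := by
    intro a b
    set L := fderiv ℝ (f μ) (x a) with hL
    have hsum : (∑ ν : Fin d, (w b ν - w a ν) • L (f ν (x a)))
        = L (x b - x a) - L (I a b) := by
      have e1 : (∑ ν : Fin d, (w b ν - w a ν) • L (f ν (x a)))
          = L (∑ ν : Fin d, (w b ν - w a ν) • f ν (x a)) := by
        rw [map_sum]
        congr 1
        ext ν
        rw [map_smul]
      rw [e1]
      have e2 : (∑ ν : Fin d, (w b ν - w a ν) • f ν (x a)) = (x b - x a) - I a b := by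
        rw [hI a b]; abel
      rw [e2, map_sub]
    have hJd : J μ a b = (f μ (x b) - f μ (x a) - L (x b - x a)) + L (I a b) := by
      rw [hJ μ a b, hsum]; abel
    rw [hJd]
    calc ‖(f μ (x b) - f μ (x a) - L (x b - x a)) + L (I a b)‖
        ≤ ‖f μ (x b) - f μ (x a) - L (x b - x a)‖ + ‖L (I a b)‖ := norm_add_le _ _
      _ ≤ C / 2 * ‖x b - x a‖ ^ 2 + C * ‖I a b‖ := by
          apply add_le_add
          · exact taylor2 (hf μ) hC2 (x a) (x b)
          · exact le_trans (L.le_opNorm _)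
              (mul_le_mul_of_nonneg_right (hC1 _) (norm_nonneg _))
      _ = C * ‖I a b‖ + C / 2 * ‖x b - x a‖ ^ 2 := by ring
  set K := (2 : ℝ) ^ (q - 1) * C ^ q with hK
  have hK0 : 0 ≤ K :=
    mul_nonneg (Real.rpow_nonneg (by norm_num) _) (Real.rpow_nonneg hC0 _)
  set A := pVarSum q I k l with hA
  set B := pVarSum p (fun a b => x b - x a) k l with hB
  have hA0 : 0 ≤ A := pVarSum_nonneg _ _ hkl
  have hB0 : 0 ≤ B := pVarSum_nonneg _ _ hkl
  have hpt : ∀ a b : ℕ, ‖J μ a b‖ ^ q ≤ K * (‖I a b‖ ^ q + 1 / 2 * ‖x b - x a‖ ^ p) := by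
    intro a b
    have hδ : ((‖x b - x a‖ ^ (2 : ℕ) : ℝ)) ^ q = ‖x b - x a‖ ^ p := by
      rw [← Real.rpow_natCast ‖x b - x a‖ 2, ← Real.rpow_mul (norm_nonneg _)]
      congr 1
      rw [hq]; push_cast; ring
    have h1 : ‖J μ a b‖ ^ q ≤ (C * ‖I a b‖ + C / 2 * ‖x b - x a‖ ^ 2) ^ q :=
      Real.rpow_le_rpow (norm_nonneg _) (hpoint a b) (by linarith)
    have h2 : (C * ‖I a b‖ + C / 2 * ‖x b - x a‖ ^ 2) ^ q ≤
        (2 : ℝ) ^ (q - 1) * ((C * ‖I a b‖) ^ q + (C / 2 * ‖x b - x a‖ ^ 2) ^ q) :=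
      real_add_rpow_le (by positivity) (by positivity) hq1
    have h3 : (C * ‖I a b‖) ^ q = C ^ q * ‖I a b‖ ^ q :=
      Real.mul_rpow hC0 (norm_nonneg _)
    have h4 : (C / 2 * ‖x b - x a‖ ^ 2) ^ q ≤ C ^ q * (1 / 2 * ‖x b - x a‖ ^ p) := by
      have e1 : (C / 2 * ‖x b - x a‖ ^ 2 : ℝ) ^ q
          = C ^ q * ((1 / 2 : ℝ) ^ q * ‖x b - x a‖ ^ p) := by
        rw [show (C / 2 * ‖x b - x a‖ ^ 2 : ℝ) = C * ((1 / 2) * ‖x b - x a‖ ^ 2) by ring,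
          Real.mul_rpow hC0 (by positivity), Real.mul_rpow (by norm_num) (by positivity), hδ]
      rw [e1]
      have h5 : ((1 : ℝ) / 2) ^ q ≤ 1 / 2 := by
        calc ((1 : ℝ) / 2) ^ q ≤ ((1 : ℝ) / 2) ^ (1 : ℝ) :=
              Real.rpow_le_rpow_of_exponent_ge (by norm_num) (by norm_num) hq1
          _ = 1 / 2 := Real.rpow_one _
      have h6 : (0 : ℝ) ≤ ‖x b - x a‖ ^ p := Real.rpow_nonneg (norm_nonneg _) p
      apply mul_le_mul_of_nonneg_left _ (Real.rpow_nonneg hC0 q)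
      exact mul_le_mul_of_nonneg_right h5 h6
    calc ‖J μ a b‖ ^ q ≤ (C * ‖I a b‖ + C / 2 * ‖x b - x a‖ ^ 2) ^ q := h1
      _ ≤ (2 : ℝ) ^ (q - 1) * ((C * ‖I a b‖) ^ q + (C / 2 * ‖x b - x a‖ ^ 2) ^ q) := h2
      _ ≤ (2 : ℝ) ^ (q - 1) * (C ^ q * ‖I a b‖ ^ q + C ^ q * (1 / 2 * ‖x b - x a‖ ^ p)) := by
          rw [h3]
          exact mul_le_mul_of_nonneg_left (add_le_add_right h4 _)
            (Real.rpow_nonneg (by norm_num) _)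
      _ = K * (‖I a b‖ ^ q + 1 / 2 * ‖x b - x a‖ ^ p) := by rw [hK]; ring
  have hsum : pVarSum q (J μ) k l ≤ K * (A + 1 / 2 * B) := by
    rw [pVarSum]
    apply csSup_le (pVarSum_set_nonempty q (J μ) hkl)
    rintro _ ⟨s, hs, rfl⟩
    calc ((s.zip s.tail).map fun ab => ‖J μ ab.1 ab.2‖ ^ q).sum
        ≤ ((s.zip s.tail).map fun ab =>
            K * (‖I ab.1 ab.2‖ ^ q + 1 / 2 * ‖x ab.2 - x ab.1‖ ^ p)).sum :=
          List.sum_le_sum (fun ab _ => hpt ab.1 ab.2)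
      _ = K * (((s.zip s.tail).map fun ab => ‖I ab.1 ab.2‖ ^ q).sum
            + 1 / 2 * ((s.zip s.tail).map fun ab => ‖x ab.2 - x ab.1‖ ^ p).sum) := by
          exact list_sum_comb _ _ _ _ _
      _ ≤ K * (A + 1 / 2 * B) := by
          apply mul_le_mul_of_nonneg_left _ hK0
          apply add_le_add (le_pVarSum q I hs)
          exact mul_le_mul_of_nonneg_left (le_pVarSum p (fun a b => x b - x a) hs) (by norm_num)
  have hJ0 : 0 ≤ pVarSum q (J μ) k l := pVarSum_nonneg _ _ hkl
  have hiq : (1 : ℝ) / q = 2 / p := by rw [hq, one_div_div]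
  have hfin : pVar q (J μ) k l ≤ (K * (A + 1 / 2 * B)) ^ ((2 : ℝ) / p) := by
    rw [pVar, hiq]
    exact Real.rpow_le_rpow hJ0 hsum (by positivity)
  have hI' : pVar q I k l ^ q = A := by
    rw [pVar, hA, ← Real.rpow_mul hA0, one_div, inv_mul_cancel₀ (ne_of_gt hq0), Real.rpow_one]
  have hx' : pVarSeq p x k l ^ p = B := by
    rw [pVarSeq, pVar, hB, ← Real.rpow_mul hB0, one_div,
      inv_mul_cancel₀ (ne_of_gt hp0), Real.rpow_one]
  rw [hI', hx']
  calc pVar q (J μ) k l ≤ (K * (A + 1 / 2 * B)) ^ ((2 : ℝ) / p) := hfin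
    _ = 2 ^ (1 - 2 / p) * C * (A + 1 / 2 * B) ^ ((2 : ℝ) / p) := by
        rw [Real.mul_rpow hK0 (by positivity), hK,
          Real.mul_rpow (Real.rpow_nonneg (by norm_num) _) (Real.rpow_nonneg hC0 _),
          ← Real.rpow_mul (by norm_num : (0:ℝ) ≤ 2), ← Real.rpow_mul hC0,
          show (q - 1) * (2 / p) = 1 - 2 / p by rw [hq]; field_simp,
          show q * (2 / p) = 1 by rw [hq]; field_simp, Real.rpow_one]
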